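/- Let δ ∈ ℝ, let I ⊆ ℝ be an open interval, and let α, β : I → ℝ be C² functions satisfying α'' = δα − 2α²β and β'' = δβ − 2αβ² on I. Then the functions κ₁ := α'β − αβ' and κ₂ := α'β' − δαβ + α²β² are constant on I. Moreover, the product s := αβ satisfies s'' = −6s² + 4δs + 2κ₂ and (s')² = −4s³ + 4δs² + 4κ₂·s + κ₁² on I. -/

import Mathlib

open Set

lemma const_of_hasDerivAt_zero {I : Set ℝ} (hIopen : IsOpen I) (hIconn : I.OrdConnected)
    {f : ℝ → ℝ} (hf : ∀ x ∈ I, HasDerivAt f 0 x) {x y : ℝ} (hx : x ∈ I) (hy : y ∈ I) :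
    f x = f y := by
  have hconv : Convex ℝ I := hIconn.convex_of_chain (isChain_of_trichotomous I)
  refine hconv.is_const_of_fderivWithin_eq_zero
    (fun z hz => ((hf z hz).differentiableAt).differentiableWithinAt) (fun z hz => ?_) hx hy
  rw [((hf z hz).hasFDerivAt.hasFDerivWithinAt).fderivWithin (hIopen.uniqueDiffOn z hz)]
  ext; simp

/-- First integrals of the system `α'' = δα − 2α²β`, `β'' = δβ − 2αβ²`:
`κ₁ = α'β − αβ'` and `κ₂ = α'β' − δαβ + α²β²` are constant, and the product `s = αβ`
satisfies `s'' = −6s² + 4δs + 2κ₂` and `(s')² = −4s³ + 4δs² + 4κ₂s + κ₁²`. -/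
theorem first_integrals_of_capillary_system
    (δ : ℝ) (I : Set ℝ) (hIopen : IsOpen I) (hIconn : I.OrdConnected) (hIne : I.Nonempty)
    (α β α' β' α'' β'' : ℝ → ℝ)
    (hα' : ∀ x ∈ I, HasDerivAt α (α' x) x)
    (hα'' : ∀ x ∈ I, HasDerivAt α' (α'' x) x)
    (hβ' : ∀ x ∈ I, HasDerivAt β (β' x) x)
    (hβ'' : ∀ x ∈ I, HasDerivAt β' (β'' x) x)
    (hODEα : ∀ x ∈ I, α'' x = δ * α x - 2 * (α x) ^ 2 * β x)
    (hODEβ : ∀ x ∈ I, β'' x = δ * β x - 2 * α x * (β x) ^ 2) :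
    ∃ κ₁ κ₂ : ℝ,
      (∀ x ∈ I, α' x * β x - α x * β' x = κ₁) ∧
      (∀ x ∈ I, α' x * β' x - δ * α x * β x + (α x) ^ 2 * (β x) ^ 2 = κ₂) ∧
      (∀ x ∈ I, α'' x * β x + 2 * α' x * β' x + α x * β'' x
        = -6 * (α x * β x) ^ 2 + 4 * δ * (α x * β x) + 2 * κ₂) ∧
      (∀ x ∈ I, (α' x * β x + α x * β' x) ^ 2
        = -4 * (α x * β x) ^ 3 + 4 * δ * (α x * β x) ^ 2
          + 4 * κ₂ * (α x * β x) + κ₁ ^ 2) := by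
  obtain ⟨x₀, hx₀⟩ := hIne
  set κ₁ := α' x₀ * β x₀ - α x₀ * β' x₀ with hκ₁
  set κ₂ := α' x₀ * β' x₀ - δ * (α x₀ * β x₀) + (α x₀ * β x₀) ^ 2 with hκ₂
  have hk1 : ∀ x ∈ I, α' x * β x - α x * β' x = κ₁ := by
    intro x hx
    refine const_of_hasDerivAt_zero hIopen hIconn (f := fun t => α' t * β t - α t * β' t)
      (fun z hz => ?_) hx hx₀
    have h := ((hα'' z hz).mul (hβ' z hz)).sub ((hα' z hz).mul (hβ'' z hz))
    have he : α'' z * β z + α' z * β' z - (α' z * β' z + α z * β'' z) = 0 := by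
      rw [hODEα z hz, hODEβ z hz]; ring
    rwa [he] at h
  have hk2 : ∀ x ∈ I, α' x * β' x - δ * (α x * β x) + (α x * β x) ^ 2 = κ₂ := by
    intro x hx
    refine const_of_hasDerivAt_zero hIopen hIconn
      (f := fun t => α' t * β' t - δ * (α t * β t) + (α t * β t) ^ 2)
      (fun z hz => ?_) hx hx₀
    have h1 : HasDerivAt (fun t => α' t * β' t) (α'' z * β' z + α' z * β'' z) z :=
      (hα'' z hz).mul (hβ'' z hz)
    have h2 : HasDerivAt (fun t => α t * β t) (α' z * β z + α z * β' z) z :=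
      (hα' z hz).mul (hβ' z hz)
    have h3 := (h1.sub (h2.const_mul δ)).add (h2.pow 2)
    convert h3 using 1
    · rfl
    · rfl
    · rfl
    rw [hODEα z hz, hODEβ z hz]
    push_cast
    ring
  refine ⟨κ₁, κ₂, hk1, fun x hx => by linear_combination hk2 x hx, ?_, ?_⟩
  · intro x hx
    rw [hODEα x hx, hODEβ x hx]
    linear_combination 2 * hk2 x hx
  · intro x hx
    linear_combination (α' x * β x - α x * β' x + κ₁) * hk1 x hx
      + 4 * (α x * β x) * hk2 x hx
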